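/- Let k ≥ 2 and s be integers with (k−1) dividing (s−1), and suppose there exists a Steiner system S(2, (s−1)/(k−1) + 1, s). Then (s+k−2) divides s(k−1)^2, and A(s,k) ≤ s + s(k−1)^2/(s+k−2). (The blocks of the Steiner system are used as the parity sets of a systematic k-server PIR code; the number of blocks equals s(k−1)^2/(s+k−2) and every element lies in exactly k−1 blocks.) -/

import Mathlib

/-- An `s × m` matrix `G` over `F_2` has property `A_k` if for every `i` there exist
`k` pairwise disjoint subsets of the columns of `G` such that the columns in each
subset sum to the standard basis vector `e_i`. -/
def hasPropertyA (s m k : ℕ) (G : Matrix (Fin s) (Fin m) (ZMod 2)) : Prop :=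
  ∀ i : Fin s, ∃ R : Fin k → Finset (Fin m),
    (∀ j j' : Fin k, j ≠ j' → Disjoint (R j) (R j')) ∧
    ∀ j : Fin k, ∀ r : Fin s, (∑ c ∈ R j, G r c) = if r = i then 1 else 0

lemma aux_matrix (s k : ℕ) (hk : 2 ≤ k) (B : Finset (Finset (Fin s)))
    (hdeg : ∀ x : Fin s, (B.filter (fun b => x ∈ b)).card = k - 1)
    (hint : ∀ b ∈ B, ∀ b' ∈ B, b ≠ b' → ∀ x y : Fin s,
      x ∈ b → x ∈ b' → y ∈ b → y ∈ b' → x = y) :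
    ∃ G : Matrix (Fin s) (Fin (s + B.card)) (ZMod 2),
      hasPropertyA s (s + B.card) k G := by
  classical
  have hce : Fintype.card (Fin s ⊕ Fin B.card) = s + B.card := by simp
  obtain ⟨e⟩ : Nonempty ((Fin s ⊕ Fin B.card) ≃ Fin (s + B.card)) :=
    ⟨Fintype.equivFinOfCardEq hce⟩
  obtain ⟨eB⟩ : Nonempty (Fin B.card ≃ {b // b ∈ B}) :=
    ⟨(B.equivFinOfCardEq rfl).symm⟩
  -- the block associated to a column index
  set blkOf : Fin B.card → Finset (Fin s) := fun c => (eB c : Finset (Fin s)) with hblkOf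
  have hblkOfinj : Function.Injective blkOf := by
    intro a b hab
    exact eB.injective (Subtype.ext hab)
  refine ⟨fun r c => Sum.elim (fun c' => if r = c' then 1 else 0)
    (fun c' => if r ∈ blkOf c' then 1 else 0) (e.symm c), ?_⟩
  intro i
  have hBxcard : (B.filter (fun b => i ∈ b)).card = k - 1 := hdeg i
  obtain ⟨g⟩ : Nonempty (Fin (k - 1) ≃ {b // b ∈ B.filter (fun b => i ∈ b)}) :=
    ⟨((B.filter (fun b => i ∈ b)).equivFinOfCardEq hBxcard).symm⟩
  -- index in Fin B.card of the j-th block through i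
  set idx : Fin (k - 1) → Fin B.card :=
    fun j => eB.symm ⟨(g j : Finset (Fin s)), (Finset.mem_filter.mp (g j).2).1⟩ with hidx
  have hblkidx : ∀ j, blkOf (idx j) = (g j : Finset (Fin s)) := by
    intro j
    simp [hidx, hblkOf]
  have hblki : ∀ j, i ∈ blkOf (idx j) := by
    intro j
    rw [hblkidx]
    exact (Finset.mem_filter.mp (g j).2).2
  have hblkB : ∀ j, blkOf (idx j) ∈ B := by
    intro j
    rw [hblkidx]
    exact (Finset.mem_filter.mp (g j).2).1
  have hidxinj : Function.Injective idx := by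
    intro a b hab
    apply g.injective
    apply Subtype.ext
    have := congrArg blkOf hab
    rwa [hblkidx, hblkidx] at this
  set S : Fin (k - 1) → Finset (Fin (s + B.card)) := fun j =>
    ((blkOf (idx j)).erase i).image (fun x => e (Sum.inl x)) ∪ {e (Sum.inr (idx j))}
    with hS
  have hmemS : ∀ j c, c ∈ S j ↔
      (∃ x, (x ∈ blkOf (idx j) ∧ x ≠ i) ∧ e (Sum.inl x) = c) ∨ c = e (Sum.inr (idx j)) := by
    intro j c
    simp [hS, Finset.mem_union, Finset.mem_image, Finset.mem_erase, and_comm]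
    exact or_comm
  refine ⟨fun j => if hj : (j : ℕ) < k - 1 then S ⟨j, hj⟩ else {e (Sum.inl i)}, ?_, ?_⟩
  · -- disjointness
    intro j j' hne
    have hSdisj : ∀ a b : Fin (k - 1), a ≠ b → Disjoint (S a) (S b) := by
      intro a b hab
      rw [Finset.disjoint_left]
      intro c hca hcb
      rw [hmemS] at hca hcb
      have hblkne : blkOf (idx a) ≠ blkOf (idx b) :=
        fun h => hab (hidxinj (hblkOfinj h))
      rcases hca with ⟨x, ⟨hxa, hxi⟩, rfl⟩ | rfl
      · rcases hcb with ⟨y, ⟨hyb, _⟩, hy⟩ | hc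
        · have hxy : x = y := Sum.inl_injective (e.injective hy.symm)
          subst hxy
          exact hxi (hint _ (hblkB a) _ (hblkB b) hblkne i x (hblki a) (hblki b) hxa hyb).symm
        · exact absurd (e.injective hc) (by simp)
      · rcases hcb with ⟨y, ⟨_, _⟩, hy⟩ | hc
        · exact absurd (e.injective hy) (by simp)
        · exact hblkne (congrArg blkOf (Sum.inr_injective (e.injective hc)))
    by_cases hj : (j : ℕ) < k - 1 <;> by_cases hj' : (j' : ℕ) < k - 1
    · simp only [dif_pos hj, dif_pos hj']
      refine hSdisj _ _ ?_
      intro h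
      exact hne (Fin.ext (by simpa [Fin.ext_iff] using h))
    · simp only [dif_pos hj, dif_neg hj']
      rw [Finset.disjoint_right]
      intro c hc
      simp only [Finset.mem_singleton] at hc
      subst hc
      rw [hmemS]
      rintro (⟨x, ⟨_, hxi⟩, hx⟩ | hc)
      · exact hxi (Sum.inl_injective (e.injective hx))
      · exact absurd (e.injective hc) (by simp)
    · simp only [dif_neg hj, dif_pos hj']
      rw [Finset.disjoint_left]
      intro c hc
      simp only [Finset.mem_singleton] at hc
      subst hc
      rw [hmemS]
      rintro (⟨x, ⟨_, hxi⟩, hx⟩ | hc)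
      · exact hxi (Sum.inl_injective (e.injective hx))
      · exact absurd (e.injective hc) (by simp)
    · exact absurd (Fin.ext (by omega : (j : ℕ) = (j' : ℕ))) hne
  · -- sums
    intro j r
    by_cases hj : (j : ℕ) < k - 1
    · simp only [dif_pos hj, hS]
      have hdisj : Disjoint
          (((blkOf (idx ⟨j, hj⟩)).erase i).image (fun x => e (Sum.inl x)))
          ({e (Sum.inr (idx ⟨j, hj⟩))} : Finset (Fin (s + B.card))) := by
        rw [Finset.disjoint_right]
        intro c hc
        simp only [Finset.mem_singleton] at hc
        subst hc
        simp only [Finset.mem_image]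
        rintro ⟨x, _, hx⟩
        exact absurd (e.injective hx) (by simp)
      rw [Finset.sum_union hdisj,
        Finset.sum_image (fun x _ y _ hxy => Sum.inl_injective (e.injective hxy)),
        Finset.sum_singleton]
      simp only [Equiv.symm_apply_apply, Sum.elim_inl, Sum.elim_inr]
      rw [Finset.sum_ite_eq ((blkOf (idx ⟨j, hj⟩)).erase i) r (fun _ => (1 : ZMod 2))]
      have hib : i ∈ blkOf (idx ⟨j, hj⟩) := hblki ⟨j, hj⟩
      by_cases hri : r = i
      · subst hri
        simp [hib]
      · by_cases hrb : r ∈ blkOf (idx ⟨j, hj⟩)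
        · simp only [Finset.mem_erase, hri, hrb, and_self, if_true, ne_eq,
            not_false_eq_true, if_neg hri]
          decide
        · simp [Finset.mem_erase, hri, hrb]
    · simp only [dif_neg hj, Finset.sum_singleton, Equiv.symm_apply_apply, Sum.elim_inl]


/-- `PIRlen s k` = `A(s,k)`: the smallest `m` such that an `s × m` matrix over `F_2`
with property `A_k` exists. -/
noncomputable def PIRlen (s k : ℕ) : ℕ :=
  sInf {m : ℕ | ∃ G : Matrix (Fin s) (Fin m) (ZMod 2), hasPropertyA s m k G}


/-- A Steiner system `S(2, ℓ, n)`: a collection of `ℓ`-element blocks of an `n`-element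
set such that every 2-element subset is contained in exactly one block. -/
def IsSteinerSystem (ℓ n : ℕ) (B : Finset (Finset (Fin n))) : Prop :=
  (∀ b ∈ B, b.card = ℓ) ∧
  ∀ p : Finset (Fin n), p.card = 2 → ∃! b, b ∈ B ∧ p ⊆ b

/-- If `k ≥ 2`, `(k−1) ∣ (s−1)` and a Steiner system `S(2, (s−1)/(k−1) + 1, s)` exists,
then `(s+k−2) ∣ s(k−1)²` and `A(s,k) ≤ s + s(k−1)²/(s+k−2)`. -/
theorem pir_steiner_columns (s k : ℕ) (hk : 2 ≤ k) (hdvd : (k - 1) ∣ (s - 1))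
    (hex : ∃ B : Finset (Finset (Fin s)), IsSteinerSystem ((s - 1) / (k - 1) + 1) s B) :
    (s + k - 2) ∣ s * (k - 1) ^ 2 ∧
    PIRlen s k ≤ s + s * (k - 1) ^ 2 / (s + k - 2) := by
  classical
  -- trivial case s = 0
  rcases Nat.eq_zero_or_pos s with rfl | hs0
  · refine ⟨by simp, ?_⟩
    have h0 : (0 : ℕ) ∈ {m : ℕ | ∃ G : Matrix (Fin 0) (Fin m) (ZMod 2), hasPropertyA 0 m k G} :=
      ⟨fun r _ => r.elim0, fun i => i.elim0⟩
    calc PIRlen 0 k ≤ 0 := Nat.sInf_le h0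
    _ ≤ _ := Nat.zero_le _
  -- case s = 1
  rcases Nat.lt_or_ge s 2 with hs1 | hs2
  · have hseq : s = 1 := by omega
    subst hseq
    have h1 : 1 + k - 2 = k - 1 := by omega
    constructor
    · rw [h1, one_mul]
      exact dvd_pow_self _ (by norm_num)
    · have hq : 1 * (k - 1) ^ 2 / (1 + k - 2) = k - 1 := by
        rw [h1, one_mul, pow_two, Nat.mul_div_cancel_left _ (by omega : 0 < k - 1)]
      rw [hq]
      have hm : k ∈ {m : ℕ | ∃ G : Matrix (Fin 1) (Fin m) (ZMod 2), hasPropertyA 1 m k G} := by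
        refine ⟨fun _ _ => 1, fun i => ⟨fun j => {j}, ?_, ?_⟩⟩
        · intro j j' hne
          exact Finset.disjoint_singleton.mpr hne
        · intro j r
          have : r = i := Subsingleton.elim r i
          simp [this]
      have := Nat.sInf_le hm
      unfold PIRlen
      omega
  -- main case s ≥ 2
  obtain ⟨B, hcard, huniq⟩ := hex
  set d : ℕ := (s - 1) / (k - 1) with hd
  have hs1d : s - 1 = (k - 1) * d := (Nat.div_mul_cancel hdvd).symm.trans (mul_comm _ _)
  have hdpos : 0 < d := by
    rcases Nat.eq_zero_or_pos d with h | h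
    · rw [h, mul_zero] at hs1d
      omega
    · exact h
  -- intersection of two distinct blocks has at most one point
  have hint : ∀ b ∈ B, ∀ b' ∈ B, b ≠ b' → ∀ x y : Fin s,
      x ∈ b → x ∈ b' → y ∈ b → y ∈ b' → x = y := by
    intro b hb b' hb' hne x y hxb hxb' hyb hyb'
    by_contra hxy
    have hp : ({x, y} : Finset (Fin s)).card = 2 := Finset.card_pair hxy
    obtain ⟨c, _, hu⟩ := huniq _ hp
    have hsb : ({x, y} : Finset (Fin s)) ⊆ b := by
      intro z hz
      simp only [Finset.mem_insert, Finset.mem_singleton] at hz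
      rcases hz with rfl | rfl <;> assumption
    have hsb' : ({x, y} : Finset (Fin s)) ⊆ b' := by
      intro z hz
      simp only [Finset.mem_insert, Finset.mem_singleton] at hz
      rcases hz with rfl | rfl <;> assumption
    exact hne ((hu b ⟨hb, hsb⟩).trans (hu b' ⟨hb', hsb'⟩).symm)
  -- the degree of each point is k - 1
  have hdeg : ∀ x : Fin s, (B.filter (fun b => x ∈ b)).card = k - 1 := by
    intro x
    have hU : (B.filter (fun b => x ∈ b)).biUnion (fun b => b.erase x)
        = Finset.univ.erase x := by
      apply Finset.ext
      intro y
      simp only [Finset.mem_biUnion, Finset.mem_filter, Finset.mem_erase,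
        Finset.mem_univ, and_true]
      constructor
      · rintro ⟨b, ⟨_, _⟩, hy, _⟩
        exact hy
      · intro hy
        have hp : ({x, y} : Finset (Fin s)).card = 2 := Finset.card_pair (Ne.symm hy)
        obtain ⟨b, ⟨hbB, hbsub⟩, _⟩ := huniq _ hp
        exact ⟨b, ⟨hbB, hbsub (by simp)⟩, hy, hbsub (by simp)⟩
    have hdisj : ∀ b ∈ B.filter (fun b => x ∈ b), ∀ b' ∈ B.filter (fun b => x ∈ b),
        b ≠ b' → Disjoint (b.erase x) (b'.erase x) := by
      intro b hb b' hb' hne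
      rw [Finset.disjoint_left]
      intro y hy hy'
      simp only [Finset.mem_erase] at hy hy'
      simp only [Finset.mem_filter] at hb hb'
      exact hy.1 (hint b hb.1 b' hb'.1 hne y x hy.2 hy'.2 hb.2 hb'.2)
    have hc1 : (((B.filter (fun b => x ∈ b)).biUnion (fun b => b.erase x)).card)
        = ∑ b ∈ B.filter (fun b => x ∈ b), (b.erase x).card :=
      Finset.card_biUnion hdisj
    have hc2 : ∀ b ∈ B.filter (fun b => x ∈ b), (b.erase x).card = d := by
      intro b hb
      simp only [Finset.mem_filter] at hb
      rw [Finset.card_erase_of_mem hb.2, hcard b hb.1]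
      simp
    rw [hU, Finset.sum_congr rfl hc2, Finset.sum_const, smul_eq_mul] at hc1
    have hcuniv : (Finset.univ.erase x).card = s - 1 := by
      rw [Finset.card_erase_of_mem (Finset.mem_univ x), Finset.card_univ, Fintype.card_fin]
    rw [hcuniv, hs1d] at hc1
    exact Nat.eq_of_mul_eq_mul_right hdpos (by omega)
  -- total count : |B| * (d+1) = s * (k-1)
  have htot : B.card * (d + 1) = s * (k - 1) := by
    have h1 : ∑ b ∈ B, b.card = B.card * (d + 1) := by
      rw [Finset.sum_congr rfl hcard, Finset.sum_const, smul_eq_mul]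
    have h2 : ∑ b ∈ B, b.card = ∑ x : Fin s, (B.filter (fun b => x ∈ b)).card := by
      have hbc : ∀ b : Finset (Fin s), b.card = ∑ x : Fin s, if x ∈ b then 1 else 0 := by
        intro b
        rw [Finset.sum_ite_mem, Finset.univ_inter, Finset.card_eq_sum_ones]
      have hfc : ∀ x : Fin s, (B.filter (fun b => x ∈ b)).card
          = ∑ b ∈ B, if x ∈ b then 1 else 0 := fun x => Finset.card_filter _ _
      rw [Finset.sum_congr rfl (fun b _ => hbc b), Finset.sum_comm,
        Finset.sum_congr rfl (fun x _ => (hfc x).symm)]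
    have h3 : ∑ x : Fin s, (B.filter (fun b => x ∈ b)).card = s * (k - 1) := by
      rw [Finset.sum_congr rfl (fun x _ => hdeg x), Finset.sum_const, smul_eq_mul,
        Finset.card_univ, Fintype.card_fin]
    omega
  -- key arithmetic identities
  have hsk : s + k - 2 = (k - 1) * (d + 1) := by
    have : (k - 1) * (d + 1) = (k - 1) * d + (k - 1) := by ring
    omega
  have hkey : s * (k - 1) ^ 2 = (s + k - 2) * B.card := by
    calc s * (k - 1) ^ 2 = (s * (k - 1)) * (k - 1) := by ring
    _ = (B.card * (d + 1)) * (k - 1) := by rw [htot]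
    _ = ((k - 1) * (d + 1)) * B.card := by ring
    _ = (s + k - 2) * B.card := by rw [hsk]
  refine ⟨⟨B.card, hkey⟩, ?_⟩
  have hquot : s * (k - 1) ^ 2 / (s + k - 2) = B.card := by
    rw [hkey, Nat.mul_div_cancel_left _ (by omega : 0 < s + k - 2)]
  rw [hquot]
  obtain ⟨G, hG⟩ := aux_matrix s k hk B hdeg hint
  exact Nat.sInf_le ⟨G, hG⟩
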